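/- Let $P$ be a compact Poisson manifold equipped with a finite measure $\nu$ invariant under all Hamiltonian flows. Then the pairing $\langle[\theta_1],[\theta_2]\rangle = \int_P \pi(\theta_1,\theta_2)\,d\nu$ on first de Rham cohomology is well-defined: its value depends only on the cohomology classes of the closed one-forms $\theta_1,\theta_2$, and it is bilinear and skew-symmetric. -/
import Mathlib


/-- An abstract model of the Cartan calculus of a Poisson manifold `P`.
Here `F` plays the role of the algebra `C^∞(P)` of smooth functions, `V` of the
`C^∞(P)`-module of vector fields, and `Ω1`, `Ω2` of the spaces of differential
1- and 2-forms.  The fields record the standard operations of differential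
calculus (action of vector fields on functions, Lie bracket of vector fields,
exterior derivative, pairing of forms and vector fields, interior product, Lie
derivative via Cartan's magic formula) together with their standard identities,
and the data of a Poisson bivector `π` through its induced bundle map
`sharp = π^♯` (so that `π(ω,θ) = ⟨π^♯ω, θ⟩`), the antisymmetry of `π`, the
Jacobi identity for the Poisson bracket `{f,g} = π(df,dg)`, and the fact that
`π^♯` intertwines hamiltonian one-forms with hamiltonian vector fields. -/
structure PoissonCalc (F V Ω1 Ω2 : Type*) [CommRing F] [Algebra ℝ F]
    [AddCommGroup V] [Module F V]
    [AddCommGroup Ω1] [Module ℝ Ω1] [Module F Ω1]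
    [AddCommGroup Ω2] [Module ℝ Ω2] where
  /-- action of a vector field on a function, `X(f)` -/
  act : V → F → F
  act_add : ∀ X f g, act X (f + g) = act X f + act X g
  act_mul : ∀ X f g, act X (f * g) = f * act X g + g * act X f
  act_addV : ∀ X Y f, act (X + Y) f = act X f + act Y f
  act_smulV : ∀ (f : F) (X : V) (g : F), act (f • X) g = f * act X g
  /-- Lie bracket of vector fields -/
  lieV : V → V → V
  act_lieV : ∀ X Y f, act (lieV X Y) f = act X (act Y f) - act Y (act X f)
  /-- exterior derivative on functions -/
  d0 : F →ₗ[ℝ] Ω1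
  d0_const : ∀ c : ℝ, d0 (algebraMap ℝ F c) = 0
  /-- exterior derivative on one-forms -/
  d1 : Ω1 →ₗ[ℝ] Ω2
  d1_d0 : ∀ f, d1 (d0 f) = 0
  /-- evaluation of a one-form on a vector field, `ω(X)` -/
  pair : V → Ω1 → F
  pair_addV : ∀ X Y ω, pair (X + Y) ω = pair X ω + pair Y ω
  pair_add : ∀ X ω θ, pair X (ω + θ) = pair X ω + pair X θ
  pair_smulV : ∀ (f : F) (X : V) (ω : Ω1), pair (f • X) ω = f * pair X ω
  pair_smul : ∀ (X : V) (f : F) (ω : Ω1), pair X (f • ω) = f * pair X ω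
  pair_d0 : ∀ X f, pair X (d0 f) = act X f
  /-- interior product of a vector field with a two-form -/
  ι2 : V → Ω2 → Ω1
  /-- Lie derivative of one-forms -/
  L : V → Ω1 → Ω1
  /-- Cartan's magic formula `L_X = ι_X d + d ι_X` -/
  cartan : ∀ X ω, L X ω = ι2 X (d1 ω) + d0 (pair X ω)
  L_lieV : ∀ X Y ω, L (lieV X Y) ω = L X (L Y ω) - L Y (L X ω)
  L_pair : ∀ X Y ω, act X (pair Y ω) = pair Y (L X ω) + pair (lieV X Y) ω
  L_smul : ∀ (X : V) (f : F) (ω : Ω1), L X (f • ω) = f • L X ω + act X f • ω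
  /-- one-forms are generated over functions by exact one-forms -/
  span_exact : ∀ ω : Ω1, ω ∈ Submodule.span F (Set.range d0)
  /-- the bundle map `π^♯ : T^*P → TP` induced by the Poisson bivector -/
  sharp : Ω1 → V
  sharp_add : ∀ ω θ, sharp (ω + θ) = sharp ω + sharp θ
  sharp_smul : ∀ (f : F) (ω : Ω1), sharp (f • ω) = f • sharp ω
  /-- antisymmetry of the Poisson bivector: `π(ω,θ) = -π(θ,ω)` -/
  pair_sharp_skew : ∀ ω θ, pair (sharp ω) θ = - (pair (sharp θ) ω)
  /-- the Jacobi identity for the Poisson bracket `{f,g} = π(df,dg)` -/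
  jacobi : ∀ f g h : F,
    pair (sharp (d0 f)) (d0 (pair (sharp (d0 g)) (d0 h))) =
      pair (sharp (d0 (pair (sharp (d0 f)) (d0 g)))) (d0 h) +
      pair (sharp (d0 g)) (d0 (pair (sharp (d0 f)) (d0 h)))
  /-- `π^♯ d{f,g} = [π^♯ df, π^♯ dg]`, i.e. `X_{{f,g}} = [X_f, X_g]` -/
  sharp_hamiltonian : ∀ f g : F,
    sharp (d0 (pair (sharp (d0 f)) (d0 g))) = lieV (sharp (d0 f)) (sharp (d0 g))

namespace PoissonCalc

variable {F V Ω1 Ω2 : Type*} [CommRing F] [Algebra ℝ F]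
    [AddCommGroup V] [Module F V]
    [AddCommGroup Ω1] [Module ℝ Ω1] [Module F Ω1]
    [AddCommGroup Ω2] [Module ℝ Ω2]
variable (C : PoissonCalc F V Ω1 Ω2)

/-- The Poisson bivector evaluated on two one-forms: `π(ω,θ) = ⟨π^♯ω, θ⟩`. -/
def piv (ω θ : Ω1) : F := C.pair (C.sharp ω) θ

/-- The bracket of one-forms on a Poisson manifold:
`[ω,θ] = L_{X_ω}θ - L_{X_θ}ω - d(π(ω,θ))`, where `X_ω = π^♯ω`. -/
def kbr (ω θ : Ω1) : Ω1 :=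
  C.L (C.sharp ω) θ - C.L (C.sharp θ) ω - C.d0 (C.piv ω θ)

end PoissonCalc

/-- Let `P` be a compact Poisson manifold equipped with a
finite measure `ν` invariant under all hamiltonian flows; `I f = ∫_P f dν`
denotes integration against `ν`, and invariance is expressed
infinitesimally: `∫_P X_θ(f) dν = 0` for every closed one-form `θ` and
every function `f` (the flow of `X_θ = π^♯θ` preserves `ν`).  Then the
pairing `⟨[θ₁],[θ₂]⟩ = ∫_P π(θ₁,θ₂) dν` on first de Rham cohomology is
well defined (it depends only on the cohomology classes of the closed
one-forms `θ₁, θ₂`), bilinear, and skew-symmetric. -/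
theorem invariant_measure_pairing
    {F V Ω1 Ω2 : Type*} [CommRing F] [Algebra ℝ F]
    [AddCommGroup V] [Module F V]
    [AddCommGroup Ω1] [Module ℝ Ω1] [Module F Ω1]
    [AddCommGroup Ω2] [Module ℝ Ω2] [IsScalarTower ℝ F Ω1]
    (C : PoissonCalc F V Ω1 Ω2)
    (I : F →ₗ[ℝ] ℝ)
    (hinv : ∀ θ : Ω1, C.d1 θ = 0 → ∀ f : F, I (C.act (C.sharp θ) f) = 0) :
    -- well defined on cohomology classes
    (∀ θ₁ θ₁' θ₂ θ₂' : Ω1, C.d1 θ₁ = 0 → C.d1 θ₁' = 0 → C.d1 θ₂ = 0 →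
      C.d1 θ₂' = 0 → θ₁ - θ₁' ∈ Set.range C.d0 → θ₂ - θ₂' ∈ Set.range C.d0 →
      I (C.piv θ₁ θ₂) = I (C.piv θ₁' θ₂'))
    -- additive in each argument
    ∧ (∀ θ₁ θ₁' θ₂ : Ω1, I (C.piv (θ₁ + θ₁') θ₂) =
        I (C.piv θ₁ θ₂) + I (C.piv θ₁' θ₂))
    ∧ (∀ θ₁ θ₂ θ₂' : Ω1, I (C.piv θ₁ (θ₂ + θ₂')) =
        I (C.piv θ₁ θ₂) + I (C.piv θ₁ θ₂'))
    -- homogeneous in each argument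
    ∧ (∀ (c : ℝ) (θ₁ θ₂ : Ω1), I (C.piv (c • θ₁) θ₂) = c * I (C.piv θ₁ θ₂))
    ∧ (∀ (c : ℝ) (θ₁ θ₂ : Ω1), I (C.piv θ₁ (c • θ₂)) = c * I (C.piv θ₁ θ₂))
    -- skew-symmetric
    ∧ (∀ θ₁ θ₂ : Ω1, I (C.piv θ₁ θ₂) = - I (C.piv θ₂ θ₁)) := by
  have hadd1 : ∀ a b c : Ω1, C.piv (a + b) c = C.piv a c + C.piv b c := by
    intro a b c
    simp [PoissonCalc.piv, C.sharp_add, C.pair_addV]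
  have hadd2 : ∀ a b c : Ω1, C.piv a (b + c) = C.piv a b + C.piv a c := by
    intro a b c
    simp [PoissonCalc.piv, C.pair_add]
  have hskew : ∀ a b : Ω1, C.piv a b = - C.piv b a := by
    intro a b
    rw [PoissonCalc.piv, PoissonCalc.piv, C.pair_sharp_skew]
  have hsmulF : ∀ (c : ℝ) (f : F), I (c • f) = c * I f := fun c f => I.map_smul c f
  have hsm1 : ∀ (c : ℝ) (a b : Ω1), C.piv (c • a) b = (algebraMap ℝ F c) * C.piv a b := by
    intro c a b
    have : (c : ℝ) • a = (algebraMap ℝ F c) • a := (algebraMap_smul F c a).symm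
    rw [PoissonCalc.piv, this, C.sharp_smul, C.pair_smulV, PoissonCalc.piv]
  -- exactness kills the pairing
  have hexact : ∀ (θ : Ω1), C.d1 θ = 0 → ∀ f : F, I (C.piv θ (C.d0 f)) = 0 := by
    intro θ hθ f
    have : C.piv θ (C.d0 f) = C.act (C.sharp θ) f := by
      rw [PoissonCalc.piv, C.pair_d0]
    rw [this]
    exact hinv θ hθ f
  have hexact' : ∀ (θ : Ω1), C.d1 θ = 0 → ∀ f : F, I (C.piv (C.d0 f) θ) = 0 := by
    intro θ hθ f
    rw [hskew, map_neg, hexact θ hθ f, neg_zero]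
  refine ⟨?_, ?_, ?_, ?_, ?_, ?_⟩
  · intro θ₁ θ₁' θ₂ θ₂' h1 h1' h2 h2' hd1 hd2
    obtain ⟨f, hf⟩ := hd1
    obtain ⟨g, hg⟩ := hd2
    have e1 : θ₁ = θ₁' + C.d0 f := by rw [hf]; abel
    have e2 : θ₂ = θ₂' + C.d0 g := by rw [hg]; abel
    rw [e1, e2, hadd1, hadd2, hadd2, map_add, map_add, map_add,
      hexact θ₁' h1' g, hexact' θ₂' h2' f,
      hexact (C.d0 f) (C.d1_d0 f) g]
    ring
  · intro θ₁ θ₁' θ₂; rw [hadd1, map_add]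
  · intro θ₁ θ₂ θ₂'; rw [hadd2, map_add]
  · intro c θ₁ θ₂
    rw [hsm1, ← Algebra.smul_def, hsmulF]
  · intro c θ₁ θ₂
    rw [hskew θ₁ (c • θ₂), hsm1, ← Algebra.smul_def, map_neg, hsmulF,
      hskew θ₁ θ₂, map_neg]
    ring
  · intro θ₁ θ₂; rw [hskew, map_neg]
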